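/- Let E = E(x,y) ∈ ℚ[[x,y]] be the unique bivariate formal power series with zero constant term satisfying E = x + y·E·(1−E²)^{−1} (the series 1−E² is invertible since E has zero constant term, and E is uniquely determined by induction on total degree). Then for all integers i ≥ 1 and j ≥ 0, the coefficient of x^{2i−1}·y^{j+1} in E equals (1/(2i−1))·binom(2i+j−1, j+1)·binom(i+j−1, j). -/

import Mathlib

open MvPowerSeries Finsupp
noncomputable section
namespace Stmt6Aux

abbrev Idx := (Fin 2 →₀ ℕ) × (Fin 2 →₀ ℕ)

def D (s : Fin 2) (F : MvPowerSeries (Fin 2) ℚ) : MvPowerSeries (Fin 2) ℚ :=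
  fun d => ((d s : ℚ) + 1) * F (d + Finsupp.single s 1)

lemma coeff_D (s : Fin 2) (F : MvPowerSeries (Fin 2) ℚ) (d : Fin 2 →₀ ℕ) :
    coeff d (D s F) = ((d s : ℚ) + 1) * coeff (d + Finsupp.single s 1) F := rfl

lemma sum_shift (s : Fin 2) (d : Fin 2 →₀ ℕ) (F G : (Fin 2 →₀ ℕ) → ℚ) :
    (Finset.HasAntidiagonal.antidiagonal (d + Finsupp.single s 1)).sum
        (fun (pq : Idx) => ((pq.2 s : ℚ)) * (F pq.1 * G pq.2))
      = (Finset.HasAntidiagonal.antidiagonal d).sum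
        (fun (pq : Idx) => ((pq.2 s : ℚ) + 1) * (F pq.1 * G (pq.2 + Finsupp.single s 1))) := by
  rw [← Finset.sum_filter_of_ne (p := fun (pq : Idx) => pq.2 s ≠ 0)]
  · refine Finset.sum_bij'
      (fun (pq : Idx) (_ : pq ∈ (Finset.HasAntidiagonal.antidiagonal (d + Finsupp.single s 1)).filter
          (fun pq => pq.2 s ≠ 0)) => (pq.1, pq.2 - Finsupp.single s 1))
      (fun (pq : Idx) (_ : pq ∈ Finset.HasAntidiagonal.antidiagonal d) =>
          (pq.1, pq.2 + Finsupp.single s 1)) ?hi ?hj ?li ?ri ?vals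
    case hi =>
      rintro ⟨p, q⟩ h
      simp only [Finset.mem_filter, Finset.HasAntidiagonal.mem_antidiagonal] at h
      simp only [Finset.HasAntidiagonal.mem_antidiagonal]
      ext t
      have ht2 := DFunLike.congr_fun h.1 t
      have hq : q s ≠ 0 := h.2
      simp only [Finsupp.coe_add, Pi.add_apply] at ht2 ⊢
      rw [Finsupp.tsub_apply]
      by_cases ht : t = s
      · subst ht
        simp only [Finsupp.single_apply, if_pos rfl, if_true, eq_self_iff_true] at ht2 ⊢
        omega
      · simp only [Finsupp.single_apply, if_neg (Ne.symm ht)] at ht2 ⊢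
        omega
    case hj =>
      rintro ⟨p, q⟩ h
      simp only [Finset.HasAntidiagonal.mem_antidiagonal] at h
      simp only [Finset.mem_filter, Finset.HasAntidiagonal.mem_antidiagonal]
      refine ⟨by rw [← h, add_assoc], by simp⟩
    case li =>
      rintro ⟨p, q⟩ h
      simp only [Finset.mem_filter, Finset.HasAntidiagonal.mem_antidiagonal] at h
      have hle : Finsupp.single s 1 ≤ q := by
        rw [Finsupp.single_le_iff]
        exact Nat.one_le_iff_ne_zero.mpr h.2
      dsimp only
      rw [tsub_add_cancel_of_le hle]
    case ri =>
      rintro ⟨p, q⟩ h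
      dsimp only
      rw [add_tsub_cancel_right]
    case vals =>
      rintro ⟨p, q⟩ h
      simp only [Finset.mem_filter, Finset.HasAntidiagonal.mem_antidiagonal] at h
      have h4 : 1 ≤ q s := Nat.one_le_iff_ne_zero.mpr h.2
      have hle : Finsupp.single s 1 ≤ q := Finsupp.single_le_iff.mpr h4
      have h2 : ((q - Finsupp.single s 1 : Fin 2 →₀ ℕ)) s = q s - 1 := by
        rw [Finsupp.tsub_apply, Finsupp.single_eq_same]
      dsimp only
      rw [tsub_add_cancel_of_le hle, h2]
      have h3 : ((q s - 1 : ℕ) : ℚ) + 1 = (q s : ℚ) := by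
        push_cast [h4]; ring
      rw [h3]
  · intro pq _ h
    intro hz
    exact h (by simp [hz])

lemma sum_swap_anti (n : Fin 2 →₀ ℕ) (f : Idx → ℚ) :
    (Finset.HasAntidiagonal.antidiagonal n).sum f = (Finset.HasAntidiagonal.antidiagonal n).sum (fun pq => f pq.swap) := by
  conv_lhs => rw [← Finset.HasAntidiagonal.map_swap_antidiagonal (n := n), Finset.sum_map]
  rfl

lemma sum_shift_fst (s : Fin 2) (d : Fin 2 →₀ ℕ) (F G : (Fin 2 →₀ ℕ) → ℚ) :
    (Finset.HasAntidiagonal.antidiagonal (d + Finsupp.single s 1)).sum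
        (fun (pq : Idx) => ((pq.1 s : ℚ)) * (G pq.2 * F pq.1))
      = (Finset.HasAntidiagonal.antidiagonal d).sum
        (fun (pq : Idx) => ((pq.1 s : ℚ) + 1) * (G pq.2 * F (pq.1 + Finsupp.single s 1))) := by
  rw [sum_swap_anti (d + Finsupp.single s 1), sum_swap_anti d]
  exact sum_shift s d G F

theorem D_mul (s : Fin 2) (F G : MvPowerSeries (Fin 2) ℚ) :
    D s (F * G) = F * D s G + D s F * G := by
  ext d
  rw [map_add, coeff_D, coeff_mul, coeff_mul, coeff_mul]
  have key : ∀ pq : Idx, pq ∈ Finset.HasAntidiagonal.antidiagonal (d + Finsupp.single s 1) →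
      ((d s : ℚ) + 1) * (coeff pq.1 F * coeff pq.2 G)
      = ((pq.2 s : ℚ)) * (coeff pq.1 F * coeff pq.2 G)
        + ((pq.1 s : ℚ)) * (coeff pq.2 G * coeff pq.1 F) := by
    intro pq h
    simp only [Finset.HasAntidiagonal.mem_antidiagonal] at h
    have h1 := DFunLike.congr_fun h s
    simp only [Finsupp.coe_add, Pi.add_apply, Finsupp.single_apply, if_pos rfl] at h1
    norm_num at h1
    have hc := congrArg (Nat.cast : ℕ → ℚ) h1
    push_cast at hc
    rw [← hc]; ring
  rw [Finset.mul_sum, Finset.sum_congr rfl key, Finset.sum_add_distrib]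
  congr 1
  · rw [sum_shift s d (fun p => coeff p F) (fun q => coeff q G)]
    apply Finset.sum_congr rfl
    intro pq h
    rw [coeff_D]; ring
  · rw [sum_shift_fst s d (fun p => coeff p F) (fun q => coeff q G)]
    apply Finset.sum_congr rfl
    intro pq h
    rw [coeff_D]; ring

lemma D_add (s : Fin 2) (F G : MvPowerSeries (Fin 2) ℚ) :
    D s (F + G) = D s F + D s G := by
  ext d
  simp only [coeff_D, map_add, mul_add]

lemma D_sub (s : Fin 2) (F G : MvPowerSeries (Fin 2) ℚ) :
    D s (F - G) = D s F - D s G := by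
  ext d
  simp only [coeff_D, map_sub, mul_sub]

lemma D_sq (s : Fin 2) (F : MvPowerSeries (Fin 2) ℚ) :
    D s (F ^ 2) = 2 * F * D s F := by
  have : F ^ 2 = F * F := sq F
  rw [this, D_mul]; ring

lemma D_cube (s : Fin 2) (F : MvPowerSeries (Fin 2) ℚ) :
    D s (F ^ 3) = 3 * F ^ 2 * D s F := by
  have : F ^ 3 = F * (F * F) := by ring
  rw [this, D_mul, D_mul]; ring

lemma D_X_same (s : Fin 2) : D s (X s : MvPowerSeries (Fin 2) ℚ) = 1 := by
  ext d
  rw [coeff_D, coeff_X, coeff_one]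
  by_cases hd : d = 0
  · subst hd; simp
  · rw [if_neg hd, if_neg, mul_zero]
    intro hc
    apply hd
    ext t
    have := DFunLike.congr_fun hc t
    simp only [Finsupp.coe_add, Pi.add_apply] at this
    by_cases ht : t = s
    · subst ht
      simp only [Finsupp.single_eq_same, Finsupp.coe_zero, Pi.zero_apply] at this ⊢
      omega
    · simp only [Finsupp.single_apply, if_neg (Ne.symm ht), Finsupp.coe_zero, Pi.zero_apply] at this ⊢
      omega

lemma D_X_other {s t : Fin 2} (h : s ≠ t) : D s (X t : MvPowerSeries (Fin 2) ℚ) = 0 := by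
  ext d
  rw [coeff_D, coeff_X, if_neg, mul_zero, map_zero]
  intro hc
  have := DFunLike.congr_fun hc s
  simp [Finsupp.single_apply, Ne.symm h, h] at this


/-- exponent vector x^m y^n -/
def ee (m n : ℕ) : Fin 2 →₀ ℕ := Finsupp.single 0 m + Finsupp.single 1 n

lemma ee_apply0 (m n : ℕ) : ee m n 0 = m := by simp [ee]
lemma ee_apply1 (m n : ℕ) : ee m n 1 = n := by simp [ee]

lemma ee_add (m n a b : ℕ) : ee a b + ee m n = ee (m+a) (n+b) := by
  simp only [ee, Finsupp.single_add]
  ext t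
  simp only [Finsupp.coe_add, Pi.add_apply]
  ring

lemma ee_add_s0 (m n : ℕ) : ee m n + Finsupp.single 0 1 = ee (m+1) n := by
  simp only [ee]; ext t; simp only [Finsupp.coe_add, Pi.add_apply]
  by_cases ht : t = (0 : Fin 2)
  · subst ht; simp [Finsupp.single_apply]
  · simp [Finsupp.single_apply, Ne.symm ht, ht]

lemma ee_add_s1 (m n : ℕ) : ee m n + Finsupp.single 1 1 = ee m (n+1) := by
  simp only [ee]; ext t; simp only [Finsupp.coe_add, Pi.add_apply]
  by_cases ht : t = (1 : Fin 2)
  · subst ht; simp [Finsupp.single_apply]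
  · simp [Finsupp.single_apply, Ne.symm ht, ht]

lemma ee_zero : ee 0 0 = 0 := by simp [ee]

lemma ee_eq_single0 (m n : ℕ) : ee m n = Finsupp.single 0 1 ↔ m = 1 ∧ n = 0 := by
  constructor
  · intro h
    have h0 := DFunLike.congr_fun h 0
    have h1 := DFunLike.congr_fun h 1
    rw [ee_apply0] at h0; rw [ee_apply1] at h1
    simp [Finsupp.single_apply] at h0 h1
    exact ⟨h0, h1⟩
  · rintro ⟨rfl, rfl⟩
    simp [ee]

section helpers
variable (F : MvPowerSeries (Fin 2) ℚ)

lemma cX0 (m n : ℕ) : coeff (ee (m+1) n) (X 0 * F) = coeff (ee m n) F := by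
  have : (X 0 : MvPowerSeries (Fin 2) ℚ) = monomial (Finsupp.single 0 1) 1 := rfl
  rw [this, ← ee_add_s0, add_comm (ee m n)]
  have h := MvPowerSeries.coeff_add_monomial_mul (m := Finsupp.single (0:Fin 2) 1) (n := ee m n) (φ := F) (1 : ℚ)
  rw [h, one_mul]

lemma cX0zero (n : ℕ) : coeff (ee 0 n) (X 0 * F) = 0 := by
  have : (X 0 : MvPowerSeries (Fin 2) ℚ) = monomial (Finsupp.single 0 1) 1 := rfl
  rw [this, MvPowerSeries.coeff_monomial_mul, if_neg]
  intro hle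
  have := hle 0
  simp [Finsupp.single_apply, ee_apply0] at this

lemma cX1 (m n : ℕ) : coeff (ee m (n+1)) (X 1 * F) = coeff (ee m n) F := by
  have : (X 1 : MvPowerSeries (Fin 2) ℚ) = monomial (Finsupp.single 1 1) 1 := rfl
  rw [this, ← ee_add_s1, add_comm (ee m n)]
  have h := MvPowerSeries.coeff_add_monomial_mul (m := Finsupp.single (1:Fin 2) 1) (n := ee m n) (φ := F) (1 : ℚ)
  rw [h, one_mul]

lemma cX1zero (m : ℕ) : coeff (ee m 0) (X 1 * F) = 0 := by
  have : (X 1 : MvPowerSeries (Fin 2) ℚ) = monomial (Finsupp.single 1 1) 1 := rfl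
  rw [this, MvPowerSeries.coeff_monomial_mul, if_neg]
  intro hle
  have := hle 1
  rw [ee_apply1] at this
  simp [Finsupp.single_apply] at this
end helpers


lemma cD0 (F : MvPowerSeries (Fin 2) ℚ) (m n : ℕ) :
    coeff (ee m n) (D 0 F) = ((m : ℚ) + 1) * coeff (ee (m+1) n) F := by
  rw [coeff_D, ee_apply0, ee_add_s0]

lemma cD1 (F : MvPowerSeries (Fin 2) ℚ) (m n : ℕ) :
    coeff (ee m n) (D 1 F) = ((n : ℚ) + 1) * coeff (ee m (n+1)) F := by
  rw [coeff_D, ee_apply1, ee_add_s1]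

lemma cXval (m n : ℕ) :
    coeff (ee m n) (X 0 : MvPowerSeries (Fin 2) ℚ) = if m = 1 ∧ n = 0 then 1 else 0 := by
  rw [MvPowerSeries.coeff_X]
  by_cases h : m = 1 ∧ n = 0
  · rw [if_pos ((ee_eq_single0 m n).mpr h), if_pos h]
  · rw [if_neg (fun hc => h ((ee_eq_single0 m n).mp hc)), if_neg h]

/-- closed form for the coefficients -/
def f : ℕ → ℕ → ℚ
  | p, 0 => if p = 1 then 1 else 0
  | p, (r+1) => if p % 2 = 1 then
      ((Nat.choose ((p-1)/2 + r) r : ℚ) * (Nat.choose (p + r) r : ℚ))/(r+1) else 0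

lemma f_zero (p : ℕ) : f p 0 = if p = 1 then 1 else 0 := rfl

lemma f_even (p q : ℕ) (h : p % 2 = 0) : f p q = 0 := by
  cases q with
  | zero => rw [f_zero, if_neg]; omega
  | succ r => show (if p % 2 = 1 then _ else 0) = 0; rw [if_neg]; omega

lemma f_odd (k r : ℕ) : f (2*k+1) (r+1)
    = ((Nat.choose (k + r) r : ℚ) * (Nat.choose (2*k+1 + r) r : ℚ))/(r+1) := by
  show (if (2*k+1) % 2 = 1 then
      ((Nat.choose ((2*k+1-1)/2 + r) r : ℚ) * (Nat.choose (2*k+1 + r) r : ℚ))/(r+1) else 0) = _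
  rw [if_pos (by omega), show (2*k+1-1)/2 = k from by omega]

lemma f_one (q : ℕ) : f 1 q = 1 := by
  cases q with
  | zero => rfl
  | succ r =>
    have h := f_odd 0 r
    norm_num at h
    rw [h, show (1+r).choose r = r+1 from by rw [add_comm]; exact Nat.choose_succ_self_right r]
    have hr : (r:ℚ)+1 ≠ 0 := by positivity
    push_cast
    field_simp

/-- ratio lemma 1 : (r+1) * C(a+r+1, r+1) = C(a+r, r) * (a+r+1) -/
lemma chooseAux1 (a r : ℕ) :
    ((r:ℚ)+1) * (Nat.choose (a+r+1) (r+1) : ℚ) = (Nat.choose (a+r) r : ℚ) * ((a:ℚ)+(r:ℚ)+1) := by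
  have h := Nat.add_one_mul_choose_eq (a+r) r
  have h2 := congrArg (Nat.cast : ℕ → ℚ) h
  push_cast at h2
  linarith [h2]

/-- ratio lemma 2 : C(a+r, r+1) * (r+1) = C(a+r, r) * a -/
lemma chooseAux2 (a r : ℕ) :
    (Nat.choose (a+r) (r+1) : ℚ) * ((r:ℚ)+1) = (Nat.choose (a+r) r : ℚ) * (a:ℚ) := by
  have h := Nat.choose_succ_right_eq (a+r) r
  rw [Nat.add_sub_cancel] at h
  have h2 := congrArg (Nat.cast : ℕ → ℚ) h
  push_cast at h2
  linarith [h2]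

lemma fM2 (p v : ℕ) :
    8*(p:ℚ)*f p (v+2) + (p:ℚ)*f p (v+1)
      + (if 2 ≤ p then 4*((v:ℚ)+3)*f (p-2) (v+3) else 0)
      + 2*((v:ℚ)+1)*f p (v+1) + 2*((v:ℚ)+2)*f p (v+2)
    = 4*((v:ℚ)+3)*f p (v+3) + 2*f p (v+2) + f p (v+1) := by
  rcases Nat.even_or_odd p with he | ho
  · have hp : p % 2 = 0 := Nat.even_iff.mp he
    have hp2 : (p-2) % 2 = 0 := by omega
    rw [f_even p _ hp, f_even p _ hp, f_even p _ hp]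
    rw [show (if 2 ≤ p then 4*((v:ℚ)+3)*f (p-2) (v+3) else 0) = 0 from ?_]
    · ring
    · split
      · rw [f_even _ _ hp2]; ring
      · rfl
  · obtain ⟨k, rfl⟩ := ho
    rcases k with _ | j
    · -- p = 1
      rw [if_neg (by omega)]
      norm_num [f_one]
      ring
    · -- p = 2j+3
      rw [if_pos (by omega)]
      have h1 := f_odd (j+1) v
      have h2 := f_odd (j+1) (v+1)
      have h3 : f (2*(j+1)+1) (v+3)
          = ((Nat.choose ((j+1) + (v+2)) (v+2) : ℚ) * (Nat.choose (2*(j+1)+1 + (v+2)) (v+2) : ℚ))/((v+2:ℕ)+1) :=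
        f_odd (j+1) (v+2)
      have h4 : f (2*(j+1)+1-2) (v+3)
          = ((Nat.choose (j + (v+2)) (v+2) : ℚ) * (Nat.choose (2*j+1 + (v+2)) (v+2) : ℚ))/((v+2:ℕ)+1) := by
        rw [show 2*(j+1)+1-2 = 2*j+1 from by omega]
        exact f_odd j (v+2)
      rw [h1, h2, h3, h4]
      -- canonicalize indices
      rw [show j+1+v = j+v+1 from by omega, show 2*(j+1)+1+v = 2*j+v+3 from by omega,
          show j+1+(v+1) = j+v+2 from by omega, show 2*(j+1)+1+(v+1) = 2*j+v+4 from by omega,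
          show (j+1)+(v+2) = j+v+3 from by omega, show 2*(j+1)+1+(v+2) = 2*j+v+5 from by omega,
          show j+(v+2) = j+v+2 from by omega, show 2*j+1+(v+2) = 2*j+v+3 from by omega]
      push_cast
      -- ratio relations
      have hv1 : ((v:ℚ)+1) ≠ 0 := by positivity
      have hv2 : ((v:ℚ)+2) ≠ 0 := by positivity
      have r1 : ((v:ℚ)+1) * (Nat.choose (j+v+2) (v+1) : ℚ)
          = (Nat.choose (j+v+1) v : ℚ) * ((j:ℚ)+(v:ℚ)+2) := by
        have h := chooseAux1 (j+1) v
        rw [show j+1+v+1 = j+v+2 from by omega, show j+1+v = j+v+1 from by omega] at h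
        push_cast at h
        linear_combination h
      have r2 : ((v:ℚ)+2) * (Nat.choose (j+v+3) (v+2) : ℚ)
          = (Nat.choose (j+v+2) (v+1) : ℚ) * ((j:ℚ)+(v:ℚ)+3) := by
        have h := chooseAux1 (j+1) (v+1)
        rw [show j+1+(v+1)+1 = j+v+3 from by omega, show j+1+(v+1) = j+v+2 from by omega] at h
        push_cast at h
        linear_combination h
      have r3 : ((v:ℚ)+1) * (Nat.choose (2*j+v+4) (v+1) : ℚ)
          = (Nat.choose (2*j+v+3) v : ℚ) * (2*(j:ℚ)+(v:ℚ)+4) := by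
        have h := chooseAux1 (2*j+3) v
        rw [show 2*j+3+v+1 = 2*j+v+4 from by omega, show 2*j+3+v = 2*j+v+3 from by omega] at h
        push_cast at h
        linear_combination h
      have r4 : ((v:ℚ)+2) * (Nat.choose (2*j+v+5) (v+2) : ℚ)
          = (Nat.choose (2*j+v+4) (v+1) : ℚ) * (2*(j:ℚ)+(v:ℚ)+5) := by
        have h := chooseAux1 (2*j+3) (v+1)
        rw [show 2*j+3+(v+1)+1 = 2*j+v+5 from by omega, show 2*j+3+(v+1) = 2*j+v+4 from by omega] at h
        push_cast at h
        linear_combination h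
      have r5 : (Nat.choose (j+v+2) (v+2) : ℚ) * ((v:ℚ)+2)
          = (Nat.choose (j+v+2) (v+1) : ℚ) * ((j:ℚ)+1) := by
        have h := chooseAux2 (j+1) (v+1)
        rw [show j+1+(v+1) = j+v+2 from by omega] at h
        push_cast at h
        linear_combination h
      have r6 : (Nat.choose (2*j+v+3) (v+1) : ℚ) * ((v:ℚ)+1)
          = (Nat.choose (2*j+v+3) v : ℚ) * (2*(j:ℚ)+3) := by
        have h := chooseAux2 (2*j+3) v
        rw [show 2*j+3+v = 2*j+v+3 from by omega] at h
        push_cast at h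
        linear_combination h
      have r7 : (Nat.choose (2*j+v+3) (v+2) : ℚ) * ((v:ℚ)+2)
          = (Nat.choose (2*j+v+3) (v+1) : ℚ) * (2*(j:ℚ)+2) := by
        have h := chooseAux2 (2*j+2) (v+1)
        rw [show 2*j+2+(v+1) = 2*j+v+3 from by omega] at h
        push_cast at h
        linear_combination h
      -- substitute
      have e3 : (Nat.choose (j+v+3) (v+2) : ℚ)
          = (Nat.choose (j+v+2) (v+1) : ℚ) * ((j:ℚ)+(v:ℚ)+3) / ((v:ℚ)+2) := by
        rw [eq_div_iff hv2]; linear_combination r2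
      have e4 : (Nat.choose (2*j+v+5) (v+2) : ℚ)
          = (Nat.choose (2*j+v+4) (v+1) : ℚ) * (2*(j:ℚ)+(v:ℚ)+5) / ((v:ℚ)+2) := by
        rw [eq_div_iff hv2]; linear_combination r4
      have e5 : (Nat.choose (j+v+2) (v+2) : ℚ)
          = (Nat.choose (j+v+2) (v+1) : ℚ) * ((j:ℚ)+1) / ((v:ℚ)+2) := by
        rw [eq_div_iff hv2]; linear_combination r5
      have e7 : (Nat.choose (2*j+v+3) (v+2) : ℚ)
          = (Nat.choose (2*j+v+3) (v+1) : ℚ) * (2*(j:ℚ)+2) / ((v:ℚ)+2) := by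
        rw [eq_div_iff hv2]; linear_combination r7
      have e6 : (Nat.choose (2*j+v+3) (v+1) : ℚ)
          = (Nat.choose (2*j+v+3) v : ℚ) * (2*(j:ℚ)+3) / ((v:ℚ)+1) := by
        rw [eq_div_iff hv1]; linear_combination r6
      have e1 : (Nat.choose (j+v+2) (v+1) : ℚ)
          = (Nat.choose (j+v+1) v : ℚ) * ((j:ℚ)+(v:ℚ)+2) / ((v:ℚ)+1) := by
        rw [eq_div_iff hv1]; linear_combination r1
      have e2 : (Nat.choose (2*j+v+4) (v+1) : ℚ)
          = (Nat.choose (2*j+v+3) v : ℚ) * (2*(j:ℚ)+(v:ℚ)+4) / ((v:ℚ)+1) := by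
        rw [eq_div_iff hv1]; linear_combination r3
      rw [e3, e4, e5, e7, e6, e1, e2]
      have hv3 : ((v:ℚ)+3) ≠ 0 := by positivity
      field_simp
      ring

lemma fM1 (p : ℕ) :
    8*(p:ℚ)*f p 1 + (p:ℚ)*f p 0 + (if 2 ≤ p then 8*f (p-2) 2 else 0) + 2*f p 1
    = 8*f p 2 + 2*f p 1 + f p 0 := by
  rcases Nat.even_or_odd p with he | ho
  · have hp : p % 2 = 0 := Nat.even_iff.mp he
    have hp2 : (p-2) % 2 = 0 := by omega
    rw [f_even p _ hp, f_even p _ hp, f_even p _ hp]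
    rw [show (if 2 ≤ p then 8*f (p-2) 2 else 0) = 0 from ?_]
    · ring
    · split
      · rw [f_even _ _ hp2]; ring
      · rfl
  · obtain ⟨k, rfl⟩ := ho
    rcases k with _ | j
    · rw [if_neg (by omega)]
      norm_num [f_one, f_zero]
    · rw [if_pos (by omega), show 2*(j+1)+1-2 = 2*j+1 from by omega]
      have h0 : f (2*(j+1)+1) 0 = 0 := by rw [f_zero, if_neg (by omega)]
      have h1 : f (2*(j+1)+1) 1 = 1 := by
        have := f_odd (j+1) 0
        norm_num at this
        rw [this]
      have h2 : f (2*(j+1)+1) 2 = ((Nat.choose (j+2) 1 : ℚ) * (Nat.choose (2*j+4) 1 : ℚ))/2 := by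
        have := f_odd (j+1) 1
        rw [this, show j+1+1 = j+2 from by omega, show 2*(j+1)+1+1 = 2*j+4 from by omega]
        norm_num
      have h3 : f (2*j+1) 2 = ((Nat.choose (j+1) 1 : ℚ) * (Nat.choose (2*j+2) 1 : ℚ))/2 := by
        have := f_odd j 1
        rw [this, show 2*j+1+1 = 2*j+2 from by omega]
        norm_num
      rw [h0, h1, h2, h3, Nat.choose_one_right, Nat.choose_one_right,
          Nat.choose_one_right, Nat.choose_one_right]
      push_cast
      ring

lemma fM0 (p : ℕ) :
    8*(p:ℚ)*f p 0 + (if 2 ≤ p then 4*f (p-2) 1 else 0)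
    = 4*f p 1 + 2*f p 0 + (if p = 1 then 2 else 0) := by
  rcases Nat.even_or_odd p with he | ho
  · have hp : p % 2 = 0 := Nat.even_iff.mp he
    have hp2 : (p-2) % 2 = 0 := by omega
    rw [f_even p _ hp, f_even p _ hp]
    rw [show (if 2 ≤ p then 4*f (p-2) 1 else 0) = 0 from ?_, if_neg (by omega)]
    · ring
    · split
      · rw [f_even _ _ hp2]; ring
      · rfl
  · obtain ⟨k, rfl⟩ := ho
    rcases k with _ | j
    · rw [if_neg (by omega), if_pos (by norm_num)]
      norm_num [f_one, f_zero]
    · rw [if_pos (by omega), if_neg (by omega), show 2*(j+1)+1-2 = 2*j+1 from by omega]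
      have h0 : f (2*(j+1)+1) 0 = 0 := by rw [f_zero, if_neg (by omega)]
      have h1 : f (2*(j+1)+1) 1 = 1 := by
        have := f_odd (j+1) 0
        norm_num at this
        rw [this]
      have h2 : f (2*j+1) 1 = 1 := by
        have := f_odd j 0
        norm_num at this
        rw [this]
      rw [h0, h1, h2]
      ring

section main
variable (E : MvPowerSeries (Fin 2) ℚ)
    (hE0 : MvPowerSeries.constantCoeff E = 0)
    (hEeq : E = MvPowerSeries.X 0 + MvPowerSeries.X 1 * E * (1 - E ^ 2)⁻¹)

include hE0 hEeq

lemma hstar : E = X 0 + X 1 * E + E ^ 3 - X 0 * E ^ 2 := by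
  have hinv : (1 - E ^ 2)⁻¹ * (1 - E ^ 2) = 1 := by
    apply MvPowerSeries.inv_mul_cancel
    rw [map_sub, map_one, map_pow, hE0]
    norm_num
  have h1 : E * (1 - E ^ 2) = (X 0 + X 1 * E * (1 - E ^ 2)⁻¹) * (1 - E ^ 2) := by
    rw [← hEeq]
  linear_combination h1 + (X 1 * E) * hinv

lemma hP : E ^ 3 - X 0 * E ^ 2 + (X 1 - 1) * E + X 0 = 0 := by
  linear_combination - (hstar E hE0 hEeq)

lemma hQy : (3 * E ^ 2 - 2 * X 0 * E + X 1 - 1) * D 1 E = - E := by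
  have h := congrArg (D 1) (hstar E hE0 hEeq)
  rw [D_sub, D_add, D_add, D_mul, D_mul, D_cube, D_sq, D_X_same,
      D_X_other (by decide : (1 : Fin 2) ≠ 0)] at h
  linear_combination -h

lemma hQx : (3 * E ^ 2 - 2 * X 0 * E + X 1 - 1) * D 0 E = E ^ 2 - 1 := by
  have h := congrArg (D 0) (hstar E hE0 hEeq)
  rw [D_sub, D_add, D_add, D_mul, D_mul, D_cube, D_sq, D_X_same,
      D_X_other (by decide : (0 : Fin 2) ≠ 1)] at h
  linear_combination -h

/-- the linear first-order PDE -/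
lemma hW : (C 8) * X 0 * D 0 E + X 0 * X 1 * D 0 E
      + (C 4) * X 0 ^ 2 * D 1 E + (C 2) * X 1 ^ 2 * D 1 E
      + (C 2) * X 1 * D 1 E
    = (C 4) * D 1 E + (C 2) * E + X 1 * E + (C 2) * X 0 := by
  set Q : MvPowerSeries (Fin 2) ℚ := 3 * E ^ 2 - 2 * X 0 * E + X 1 - 1 with hQdef
  have hQW : Q * ((C 8) * X 0 * D 0 E + X 0 * X 1 * D 0 E
      + (C 4) * X 0 ^ 2 * D 1 E + (C 2) * X 1 ^ 2 * D 1 E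
      + (C 2) * X 1 * D 1 E
      - ((C 4) * D 1 E + (C 2) * E + X 1 * E + (C 2) * X 0)) = 0 := by
    simp only [map_ofNat]
    linear_combination (8 * X 0 + X 0 * X 1) * (hQx E hE0 hEeq)
      + (4 * X 0 ^ 2 + 2 * X 1 ^ 2 + 2 * X 1 - 4) * (hQy E hE0 hEeq)
      + (- 6 - 3 * X 1) * (hP E hE0 hEeq)
  have hQmem : Q ∈ nonZeroDivisors (MvPowerSeries (Fin 2) ℚ) := by
    apply MvPowerSeries.mem_nonZeroDivisors_of_constantCoeff
    apply mem_nonZeroDivisors_of_ne_zero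
    rw [hQdef]
    simp only [map_sub, map_add, map_mul, map_one, map_pow, map_ofNat, hE0, constantCoeff_X]
    norm_num
  have := mem_nonZeroDivisors_iff_right.mp hQmem _ (by rw [mul_comm]; exact hQW)
  linear_combination this


end main

section masters
variable (E : MvPowerSeries (Fin 2) ℚ)
    (hV : C 8 * (X 0 * D 0 E) + X 0 * (X 1 * D 0 E)
        + C 4 * (X 0 * (X 0 * D 1 E)) + C 2 * (X 1 * (X 1 * D 1 E))
        + C 2 * (X 1 * D 1 E)
      = C 4 * D 1 E + C 2 * E + X 1 * E + C 2 * X 0)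

/-- abbreviation for coefficients -/
def aa (m n : ℕ) : ℚ := coeff (ee m n) E

include hV in
lemma M2 (u v : ℕ) :
    8*(u:ℚ)*aa E u (v+2) + (u:ℚ)*aa E u (v+1)
      + (if 2 ≤ u then 4*((v:ℚ)+3)*aa E (u-2) (v+3) else 0)
      + 2*((v:ℚ)+1)*aa E u (v+1) + 2*((v:ℚ)+2)*aa E u (v+2)
    = 4*((v:ℚ)+3)*aa E u (v+3) + 2*aa E u (v+2) + aa E u (v+1) := by
  unfold aa
  rcases u with _ | _ | w
  · have h := congrArg (coeff (ee 0 (v+2))) hV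
    simp only [map_add, coeff_C_mul] at h
    rw [cX0zero, cX0zero, cX0zero,
        cX1 _ 0 (v+1), cX1 _ 0 (v+1), cX1 _ 0 v, cD1 E 0 v, cD1 E 0 (v+1), cD1 E 0 (v+2),
        cX1 E 0 (v+1), cXval, if_neg (by omega)] at h
    rw [show v+1+1 = v+2 from rfl, show v+2+1 = v+3 from rfl] at h
    rw [if_neg (by omega)]
    push_cast at h ⊢
    linear_combination h
  · have h := congrArg (coeff (ee 1 (v+2))) hV
    simp only [map_add, coeff_C_mul] at h
    rw [cX0 _ 0 (v+2), cX0 _ 0 (v+2), cX0 _ 0 (v+2), cX0zero,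
        cX1 _ 0 (v+1), cD0 E 0 (v+2), cD0 E 0 (v+1),
        cX1 _ 1 (v+1), cX1 _ 1 (v+1), cX1 _ 1 v, cD1 E 1 v, cD1 E 1 (v+1), cD1 E 1 (v+2),
        cX1 E 1 (v+1), cXval, if_neg (by omega)] at h
    rw [show v+1+1 = v+2 from rfl, show v+2+1 = v+3 from rfl] at h
    rw [if_neg (by omega)]
    push_cast at h ⊢
    linear_combination h
  · have h := congrArg (coeff (ee (w+2) (v+2))) hV
    simp only [map_add, coeff_C_mul] at h
    rw [cX0 _ (w+1) (v+2), cX0 _ (w+1) (v+2), cX0 _ (w+1) (v+2), cX0 _ w (v+2),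
        cX1 _ (w+1) (v+1), cD0 E (w+1) (v+2), cD0 E (w+1) (v+1), cD1 E w (v+2),
        cX1 _ (w+2) (v+1), cX1 _ (w+2) (v+1), cX1 _ (w+2) v,
        cD1 E (w+2) v, cD1 E (w+2) (v+1), cD1 E (w+2) (v+2),
        cX1 E (w+2) (v+1), cXval, if_neg (by omega)] at h
    rw [show w+1+1 = w+2 from rfl, show v+1+1 = v+2 from rfl, show v+2+1 = v+3 from rfl] at h
    rw [if_pos (by omega), show w+2-2 = w from by omega]
    push_cast at h ⊢
    linear_combination h

include hV in
lemma M1 (u : ℕ) :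
    8*(u:ℚ)*aa E u 1 + (u:ℚ)*aa E u 0 + (if 2 ≤ u then 8*aa E (u-2) 2 else 0) + 2*aa E u 1
    = 8*aa E u 2 + 2*aa E u 1 + aa E u 0 := by
  unfold aa
  rcases u with _ | _ | w
  · have h := congrArg (coeff (ee 0 1)) hV
    simp only [map_add, coeff_C_mul] at h
    rw [cX0zero (D 0 E) 1, cX0zero (X 1 * D 0 E) 1, cX0zero (X 0 * D 1 E) 1,
        cX1 (X 1 * D 1 E) 0 0, cX1zero (D 1 E) 0,
        cX1 (D 1 E) 0 0, cD1 E 0 0, cD1 E 0 1,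
        cX1 E 0 0, cXval, if_neg (by omega)] at h
    rw [if_neg (by omega)]
    push_cast at h ⊢
    linear_combination h
  · have h := congrArg (coeff (ee 1 1)) hV
    simp only [map_add, coeff_C_mul] at h
    rw [cX0 (D 0 E) 0 1, cX0 (X 1 * D 0 E) 0 1, cX0 (X 0 * D 1 E) 0 1, cX0zero (D 1 E) 1,
        cX1 (D 0 E) 0 0, cD0 E 0 1, cD0 E 0 0,
        cX1 (X 1 * D 1 E) 1 0, cX1zero (D 1 E) 1,
        cX1 (D 1 E) 1 0, cD1 E 1 0, cD1 E 1 1,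
        cX1 E 1 0, cXval, if_neg (by omega)] at h
    rw [if_neg (by omega)]
    push_cast at h ⊢
    linear_combination h
  · have h := congrArg (coeff (ee (w+2) 1)) hV
    simp only [map_add, coeff_C_mul] at h
    rw [cX0 (D 0 E) (w+1) 1, cX0 (X 1 * D 0 E) (w+1) 1, cX0 (X 0 * D 1 E) (w+1) 1,
        cX0 (D 1 E) w 1,
        cX1 (D 0 E) (w+1) 0, cD0 E (w+1) 1, cD0 E (w+1) 0, cD1 E w 1,
        cX1 (X 1 * D 1 E) (w+2) 0, cX1zero (D 1 E) (w+2),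
        cX1 (D 1 E) (w+2) 0, cD1 E (w+2) 0, cD1 E (w+2) 1,
        cX1 E (w+2) 0, cXval, if_neg (by omega)] at h
    rw [if_pos (by omega), show w+2-2 = w from by omega]
    rw [show w+1+1 = w+2 from rfl] at h
    push_cast at h ⊢
    linear_combination h

include hV in
lemma M0 (u : ℕ) :
    8*(u:ℚ)*aa E u 0 + (if 2 ≤ u then 4*aa E (u-2) 1 else 0)
    = 4*aa E u 1 + 2*aa E u 0 + (if u = 1 then 2 else 0) := by
  unfold aa
  rcases u with _ | _ | w
  · have h := congrArg (coeff (ee 0 0)) hV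
    simp only [map_add, coeff_C_mul] at h
    rw [cX0zero (D 0 E) 0, cX0zero (X 1 * D 0 E) 0, cX0zero (X 0 * D 1 E) 0,
        cX1zero (X 1 * D 1 E) 0, cX1zero (D 1 E) 0,
        cD1 E 0 0, cX1zero E 0, cXval, if_neg (by omega)] at h
    rw [if_neg (by omega), if_neg (by omega)]
    push_cast at h ⊢
    linear_combination h
  · have h := congrArg (coeff (ee 1 0)) hV
    simp only [map_add, coeff_C_mul] at h
    rw [cX0 (D 0 E) 0 0, cX0 (X 1 * D 0 E) 0 0, cX0 (X 0 * D 1 E) 0 0, cX0zero (D 1 E) 0,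
        cX1zero (D 0 E) 0, cD0 E 0 0,
        cX1zero (X 1 * D 1 E) 1, cX1zero (D 1 E) 1,
        cD1 E 1 0, cX1zero E 1, cXval, if_pos (by omega)] at h
    rw [if_neg (by omega), if_pos rfl]
    push_cast at h ⊢
    linear_combination h
  · have h := congrArg (coeff (ee (w+2) 0)) hV
    simp only [map_add, coeff_C_mul] at h
    rw [cX0 (D 0 E) (w+1) 0, cX0 (X 1 * D 0 E) (w+1) 0, cX0 (X 0 * D 1 E) (w+1) 0,
        cX0 (D 1 E) w 0,
        cX1zero (D 0 E) (w+1), cD0 E (w+1) 0, cD1 E w 0,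
        cX1zero (X 1 * D 1 E) (w+2), cX1zero (D 1 E) (w+2),
        cD1 E (w+2) 0, cX1zero E (w+2), cXval, if_neg (by omega)] at h
    rw [if_pos (by omega), if_neg (by omega), show w+2-2 = w from by omega]
    rw [show w+1+1 = w+2 from rfl] at h
    push_cast at h ⊢
    linear_combination h
end masters

section final
variable (E : MvPowerSeries (Fin 2) ℚ)
    (hE0 : MvPowerSeries.constantCoeff E = 0)
    (hEeq : E = MvPowerSeries.X 0 + MvPowerSeries.X 1 * E * (1 - E ^ 2)⁻¹)

include hEeq in
lemma R0 (p : ℕ) : aa E p 0 = if p = 1 then 1 else 0 := by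
  have h2 : E = X 0 + X 1 * (E * (1 - E^2)⁻¹) := by linear_combination hEeq
  have h := congrArg (coeff (ee p 0)) h2
  rw [map_add, cX1zero, cXval, add_zero] at h
  rw [aa, h]
  by_cases hp : p = 1
  · rw [if_pos ⟨hp, rfl⟩, if_pos hp]
  · rw [if_neg (by tauto), if_neg hp]

include hE0 hEeq in
lemma levels : ∀ q p, aa E p q = f p q := by
  have hVE := hW E hE0 hEeq
  have hV : C 8 * (X 0 * D 0 E) + X 0 * (X 1 * D 0 E)
        + C 4 * (X 0 * (X 0 * D 1 E)) + C 2 * (X 1 * (X 1 * D 1 E))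
        + C 2 * (X 1 * D 1 E)
      = C 4 * D 1 E + C 2 * E + X 1 * E + C 2 * X 0 := by
    linear_combination hVE
  intro q
  induction q using Nat.strong_induction_on with
  | _ q ih =>
    obtain _ | _ | _ | v := q
    · intro p
      rw [R0 E hEeq p, f_zero]
    · -- level 1
      intro p
      induction p using Nat.strong_induction_on with
      | _ p ihp =>
        have h := M0 E hV p
        have hf := fM0 p
        have e0 : aa E p 0 = f p 0 := ih 0 (by omega) p
        rw [e0] at h
        by_cases h2 : 2 ≤ p
        · rw [if_pos h2] at h hf
          rw [if_neg (by omega)] at h hf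
          rw [ihp (p-2) (by omega)] at h
          linarith
        · rw [if_neg h2] at h hf
          by_cases hp1 : p = 1
          · rw [if_pos hp1] at h hf; linarith
          · rw [if_neg hp1] at h hf; linarith
    · -- level 2
      intro p
      induction p using Nat.strong_induction_on with
      | _ p ihp =>
        have h := M1 E hV p
        have hf := fM1 p
        have e0 : aa E p 0 = f p 0 := ih 0 (by omega) p
        have e1 : aa E p 1 = f p 1 := ih 1 (by omega) p
        rw [e0, e1] at h
        by_cases h2 : 2 ≤ p
        · rw [if_pos h2] at h hf
          rw [ihp (p-2) (by omega)] at h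
          linarith
        · rw [if_neg h2] at h hf
          linarith
    · -- level v+3
      intro p
      induction p using Nat.strong_induction_on with
      | _ p ihp =>
        have h := M2 E hV p v
        have hf := fM2 p v
        have e1 : aa E p (v+1) = f p (v+1) := ih (v+1) (by omega) p
        have e2 : aa E p (v+2) = f p (v+2) := ih (v+2) (by omega) p
        rw [e1, e2] at h
        rw [show v+1+1+1 = v+3 from rfl] at *
        by_cases h2 : 2 ≤ p
        · rw [if_pos h2] at h hf
          rw [ihp (p-2) (by omega)] at h
          have hv3 : ((v:ℚ)+3) > 0 := by positivity
          nlinarith [h, hf]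
        · rw [if_neg h2] at h hf
          have hv3 : ((v:ℚ)+3) > 0 := by positivity
          nlinarith [h, hf]
end final
end Stmt6Aux
end

/-- Let `E ∈ ℚ[[x,y]]` be the unique bivariate formal power series with zero constant term
satisfying `E = x + y·E·(1−E²)⁻¹`. Then for `i ≥ 1` and `j ≥ 0`, the coefficient of
`x^{2i−1}·y^{j+1}` in `E` equals `(1/(2i−1))·binom(2i+j−1, j+1)·binom(i+j−1, j)`. -/
theorem stmt_6 (E : MvPowerSeries (Fin 2) ℚ)
    (hE0 : MvPowerSeries.constantCoeff E = 0)
    (hEeq : E = MvPowerSeries.X 0 + MvPowerSeries.X 1 * E * (1 - E ^ 2)⁻¹) :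
    ∀ i j : ℕ, 1 ≤ i →
      MvPowerSeries.coeff (Finsupp.single (0 : Fin 2) (2 * i - 1) +
          Finsupp.single (1 : Fin 2) (j + 1)) E
        = (1 / (2 * (i : ℚ) - 1)) * ((2 * i + j - 1).choose (j + 1) : ℚ) *
            (((i + j - 1).choose j : ℕ) : ℚ) := by
  intro i j hi
  obtain ⟨i', rfl⟩ : ∃ i', i = i' + 1 := ⟨i - 1, by omega⟩
  have key := Stmt6Aux.levels E hE0 hEeq (j+1) (2*(i'+1)-1)
  rw [Stmt6Aux.aa, Stmt6Aux.ee] at key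
  rw [key]
  rw [show 2*(i'+1)-1 = 2*i'+1 from by omega, Stmt6Aux.f_odd i' j]
  rw [show 2*(i'+1)+j-1 = 2*i'+j+1 from by omega, show i'+1+j-1 = i'+j from by omega]
  have hc := Nat.choose_succ_right_eq (2*i'+j+1) j
  rw [show 2*i'+j+1-j = 2*i'+1 from by omega] at hc
  have hc2 := congrArg (Nat.cast : ℕ → ℚ) hc
  push_cast at hc2 ⊢
  rw [show 2*i'+1+j = 2*i'+j+1 from by omega]
  have h1 : ((j:ℚ)+1) ≠ 0 := by positivity
  have h2 : (2*(i':ℚ)+1) ≠ 0 := by positivity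
  have h3 : (2*((i':ℚ)+1)-1) ≠ 0 := by
    intro hz; apply h2; linarith
  field_simp
  linear_combination -((((i'+j).choose j : ℕ) : ℚ)) * hc2
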